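/- arXiv:2205.09727 — 4 statements merged into one kernel-verified Lean document; each statement's English description precedes it below -/
import Mathlib

section
/- For integers 1 ≤ ℓ ≤ k ≤ n, if k²/(n−k) ≤ 1 then P(Hypergeom(n,k,k) ≥ ℓ) ≤ k · (k²/(n−k))^ℓ. -/
open scoped ENNReal

lemma key_nat (m k j : ℕ) (hjk : j ≤ k) (hkm : k ≤ m) :
    Nat.choose k j * Nat.choose m (k - j) * m ^ j ≤ k ^ (2 * j) * Nat.choose (m + k) k := by
  have hA : Nat.choose k j ^ 2 * m ^ j ≤ k ^ (2 * j) * Nat.choose (m + j) j := by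
    have h1 : Nat.choose k j * j.factorial ≤ k ^ j := by
      rw [mul_comm, ← Nat.descFactorial_eq_factorial_mul_choose]
      exact Nat.descFactorial_le_pow _ _
    have h2 : m ^ j ≤ j.factorial * Nat.choose (m + j) j := by
      rw [← Nat.descFactorial_eq_factorial_mul_choose]
      calc m ^ j ≤ (m + 1) ^ j := Nat.pow_le_pow_left (Nat.le_succ m) j
        _ = (m + j + 1 - j) ^ j := by congr 1; omega
        _ ≤ Nat.descFactorial (m + j) j := Nat.pow_sub_le_descFactorial _ _
    have key := Nat.mul_le_mul (Nat.mul_le_mul h1 h1) h2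
    refine Nat.le_of_mul_le_mul_right ?_ (Nat.mul_pos j.factorial_pos j.factorial_pos)
    calc Nat.choose k j ^ 2 * m ^ j * (j.factorial * j.factorial)
        = Nat.choose k j * j.factorial * (Nat.choose k j * j.factorial) * m ^ j := by ring
      _ ≤ k ^ j * k ^ j * (j.factorial * Nat.choose (m + j) j) := key
      _ ≤ k ^ j * k ^ j * (j.factorial * Nat.choose (m + j) j) * j.factorial :=
          Nat.le_mul_of_pos_right _ j.factorial_pos
      _ = k ^ (2 * j) * Nat.choose (m + j) j * (j.factorial * j.factorial) := by
          rw [two_mul, pow_add]; ring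
  have hid : Nat.choose (m + j) k * Nat.choose k j
      = Nat.choose (m + j) j * Nat.choose m (k - j) := by
    have := Nat.choose_mul (n := m + j) (k := k) (s := j) hjk
    simpa using this
  have hB : Nat.choose (m + j) k ≤ Nat.choose (m + k) k :=
    Nat.choose_le_choose k (by omega)
  refine Nat.le_of_mul_le_mul_right ?_ (Nat.choose_pos (show j ≤ m + j by omega))
  calc Nat.choose k j * Nat.choose m (k - j) * m ^ j * Nat.choose (m + j) j
      = Nat.choose (m + j) j * Nat.choose m (k - j) * Nat.choose k j * m ^ j := by ring
    _ = Nat.choose (m + j) k * Nat.choose k j * Nat.choose k j * m ^ j := by rw [hid]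
    _ = Nat.choose k j ^ 2 * m ^ j * Nat.choose (m + j) k := by ring
    _ ≤ k ^ (2 * j) * Nat.choose (m + j) j * Nat.choose (m + k) k :=
        Nat.mul_le_mul hA hB
    _ = k ^ (2 * j) * Nat.choose (m + k) k * Nat.choose (m + j) j := by ring

/-- For `1 ≤ ℓ ≤ k ≤ n`, if `k²/(n−k) ≤ 1` then the hypergeometric tail satisfies
`P(Hypergeom(n,k,k) ≥ ℓ) = ∑_{j=ℓ}^{k} C(k,j)·C(n−k,k−j)/C(n,k) ≤ k · (k²/(n−k))^ℓ`
(stated in `ℝ≥0∞`). -/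
theorem hypergeom_tail_bound (n k ℓ : ℕ) (hℓ : 1 ≤ ℓ) (hℓk : ℓ ≤ k) (hkn : k ≤ n)
    (hratio : (k : ℝ≥0∞) ^ 2 / ((n : ℝ≥0∞) - (k : ℝ≥0∞)) ≤ 1) :
    ∑ j ∈ Finset.Icc ℓ k,
        ((Nat.choose k j : ℝ≥0∞) * (Nat.choose (n - k) (k - j) : ℝ≥0∞)) / (Nat.choose n k : ℝ≥0∞)
      ≤ (k : ℝ≥0∞) * ((k : ℝ≥0∞) ^ 2 / ((n : ℝ≥0∞) - (k : ℝ≥0∞))) ^ ℓ := by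
  set m := n - k with hm
  have hcast : (n : ℝ≥0∞) - (k : ℝ≥0∞) = (m : ℝ≥0∞) := by
    rw [hm, ENNReal.natCast_sub]
  rw [hcast] at hratio ⊢
  -- m ≥ k²
  have hk0 : ((k : ℝ≥0∞) ^ 2) ≠ 0 := by
    have : (1 : ℝ≥0∞) ≤ (k : ℝ≥0∞) := by exact_mod_cast Nat.one_le_cast.2 (hℓ.trans hℓk)
    positivity
  have hm0 : (m : ℝ≥0∞) ≠ 0 := by
    intro h
    rw [h, ENNReal.div_zero hk0] at hratio
    exact absurd hratio (by simp)
  have hk2m : (k : ℕ) ^ 2 ≤ m := by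
    have := (ENNReal.div_le_iff hm0 (ENNReal.natCast_ne_top m)).mp hratio
    rw [one_mul] at this
    exact_mod_cast this
  have hkm : k ≤ m := le_trans (Nat.le_self_pow two_ne_zero k) hk2m
  have hnk : n = m + k := by omega
  set r := (k : ℝ≥0∞) ^ 2 / (m : ℝ≥0∞) with hr
  have hterm : ∀ j ∈ Finset.Icc ℓ k,
      ((Nat.choose k j : ℝ≥0∞) * (Nat.choose m (k - j) : ℝ≥0∞)) / (Nat.choose n k : ℝ≥0∞)
        ≤ r ^ ℓ := by
    intro j hj
    rw [Finset.mem_Icc] at hj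
    have hC0 : ((Nat.choose n k : ℝ≥0∞)) ≠ 0 := by
      exact_mod_cast (Nat.choose_pos hkn).ne'
    have hMj0 : ((m : ℝ≥0∞) ^ j) ≠ 0 := pow_ne_zero _ hm0
    have hMjt : ((m : ℝ≥0∞) ^ j) ≠ ∞ := ENNReal.pow_ne_top (ENNReal.natCast_ne_top m)
    have step1 : ((Nat.choose k j : ℝ≥0∞) * (Nat.choose m (k - j) : ℝ≥0∞))
        / (Nat.choose n k : ℝ≥0∞) ≤ r ^ j := by
      rw [ENNReal.div_le_iff hC0 (ENNReal.natCast_ne_top _)]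
      have hrj : r ^ j * (Nat.choose n k : ℝ≥0∞)
          = ((k : ℝ≥0∞) ^ (2 * j) * (Nat.choose n k : ℝ≥0∞)) / ((m : ℝ≥0∞) ^ j) := by
        rw [hr, div_eq_mul_inv, mul_pow, ← ENNReal.inv_pow, ← pow_mul, div_eq_mul_inv]
        ring
      rw [hrj, ENNReal.le_div_iff_mul_le (Or.inl hMj0) (Or.inl hMjt)]
      have hkey := key_nat m k j hj.2 hkm
      rw [hnk]
      exact_mod_cast hkey
    refine step1.trans (pow_le_pow_right_of_le_one' hratio hj.1)
  calc ∑ j ∈ Finset.Icc ℓ k,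
        ((Nat.choose k j : ℝ≥0∞) * (Nat.choose m (k - j) : ℝ≥0∞)) / (Nat.choose n k : ℝ≥0∞)
      ≤ (Finset.Icc ℓ k).card • r ^ ℓ := Finset.sum_le_card_nsmul _ _ _ hterm
    _ = ((Finset.Icc ℓ k).card : ℝ≥0∞) * r ^ ℓ := by rw [nsmul_eq_mul]
    _ ≤ (k : ℝ≥0∞) * r ^ ℓ := by
        gcongr
        rw [Nat.card_Icc]
        exact_mod_cast (by omega : k + 1 - ℓ ≤ k)
end

section
/- For any 0 ≤ ε < t, letting Φ(t) = P(N(0,1) ≥ t), we have Φ(t−ε)/Φ(t) ≤ 1 + (ε(t²+1)/t)·exp(εt). -/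
open MeasureTheory ProbabilityTheory Real Set Filter

noncomputable def G : ℝ → ℝ := gaussianPDFReal 0 1

lemma G_def : G = fun x => (Real.sqrt (2*Real.pi))⁻¹ * Real.exp (-x^2/2) := by
  ext x
  simp [G, gaussianPDFReal]

lemma G_pos (x : ℝ) : 0 < G x := gaussianPDFReal_pos 0 1 x one_ne_zero

lemma G_integrable : Integrable G := integrable_gaussianPDFReal 0 1

lemma G_hasDeriv (x : ℝ) : HasDerivAt G (-x * G x) x := by
  have h : HasDerivAt (fun y : ℝ => (Real.sqrt (2*Real.pi))⁻¹ * Real.exp (-y^2/2))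
      ((Real.sqrt (2*Real.pi))⁻¹ * (Real.exp (-x^2/2) * (-x))) x := by
    have h1 : HasDerivAt (fun y : ℝ => -y^2/2) (-x) x := by
      have := ((hasDerivAt_pow 2 x).neg).div_const 2
      exact this.congr_deriv (by norm_num; ring)
    exact (h1.exp).const_mul _
  rw [G_def]
  convert h using 1
  ring

lemma G_anti {a x : ℝ} (ha : 0 ≤ a) (hax : a ≤ x) : G x ≤ G a := by
  rw [G_def]
  have : -x^2/2 ≤ -a^2/2 := by nlinarith
  have := Real.exp_le_exp.mpr this
  have hc : (0:ℝ) < (Real.sqrt (2*Real.pi))⁻¹ := by positivity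
  simpa using mul_le_mul_of_nonneg_left this hc.le

lemma G_cont : Continuous G := by
  rw [G_def]; continuity

lemma G_tendsto_zero : Tendsto G atTop (nhds 0) := by
  rw [G_def]
  rw [show (0:ℝ) = (Real.sqrt (2*Real.pi))⁻¹ * 0 by ring]
  refine Tendsto.const_mul _ ?_
  refine Real.tendsto_exp_atBot.comp ?_
  have h1 : Tendsto (fun x : ℝ => x^2) atTop atTop := tendsto_pow_atTop (by norm_num)
  exact (tendsto_neg_atBot_iff.mpr h1).atBot_div_const (by norm_num)

noncomputable def F : ℝ → ℝ := fun x => -(x/(x^2+1)) * G x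

noncomputable def F' : ℝ → ℝ := fun x => G x * (x^4+2*x^2-1)/(x^2+1)^2

lemma F_hasDeriv (x : ℝ) : HasDerivAt F (F' x) x := by
  have hd : (x:ℝ)^2+1 ≠ 0 := by positivity
  have h1 : HasDerivAt (fun y : ℝ => y/(y^2+1)) ((1*(x^2+1) - x*(2*x))/(x^2+1)^2) x := by
    refine (hasDerivAt_id x).div ?_ hd
    simpa using (hasDerivAt_pow 2 x).add_const 1
  have h2 := (h1.neg).mul (G_hasDeriv x)
  refine h2.congr_deriv ?_
  simp only [Pi.neg_apply]
  unfold F'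
  field_simp
  ring

lemma F'_le_G (x : ℝ) : F' x ≤ G x := by
  have hg := G_pos x
  have hd : (0:ℝ) < (x^2+1)^2 := by positivity
  rw [F', div_le_iff₀ hd]
  nlinarith [sq_nonneg (x^2+1), sq_nonneg x]

lemma F'_integrable (t : ℝ) : IntegrableOn F' (Ici t) := by
  refine (G_integrable.restrict.mono ?_ ?_)
  · refine Continuous.aestronglyMeasurable ?_
    unfold F'
    refine Continuous.div ?_ (by continuity) fun x => by positivity
    exact G_cont.mul (by continuity)
  · refine ae_of_all _ fun x => ?_
    have hg := G_pos x
    have hd : (0:ℝ) < (x^2+1)^2 := by positivity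
    rw [Real.norm_eq_abs, Real.norm_eq_abs, abs_of_pos hg]
    unfold F'
    rw [abs_div, abs_of_pos hd, div_le_iff₀ hd, abs_mul, abs_of_pos hg]
    have habs : |x^4+2*x^2-1| ≤ (x^2+1)^2 := abs_le.mpr ⟨by nlinarith [sq_nonneg x], by nlinarith [sq_nonneg x]⟩
    exact mul_le_mul_of_nonneg_left habs hg.le

lemma F_tendsto : Tendsto F atTop (nhds 0) := by
  have h1 : Tendsto (fun x : ℝ => x/(x^2+1)) atTop (nhds 0) := by
    refine tendsto_of_tendsto_of_tendsto_of_le_of_le' tendsto_const_nhds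
      tendsto_inv_atTop_zero ?_ ?_
    · filter_upwards [eventually_ge_atTop (1:ℝ)] with x hx
      positivity
    · filter_upwards [eventually_ge_atTop (1:ℝ)] with x hx
      rw [div_le_iff₀ (by positivity), inv_mul_eq_div, le_div_iff₀ (by positivity)]
      nlinarith
  have h2 := (h1.neg).mul G_tendsto_zero
  unfold F
  simpa using h2

lemma tail_lower {t : ℝ} (_ht : 0 < t) : t/(t^2+1) * G t ≤ ∫ x in Ioi t, G x := by
  have hftc : ∫ x in Ioi t, F' x = 0 - F t :=
    integral_Ioi_of_hasDerivAt_of_tendsto' (fun x _ => F_hasDeriv x)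
      ((F'_integrable t).mono_set Ioi_subset_Ici_self) F_tendsto
  have hF : 0 - F t = t/(t^2+1) * G t := by unfold F; ring
  rw [← hF, ← hftc]
  refine setIntegral_mono_on ((F'_integrable t).mono_set Ioi_subset_Ici_self)
    G_integrable.restrict measurableSet_Ioi fun x _ => F'_le_G x

lemma tail_eq (a : ℝ) : ((gaussianReal 0 1) (Ici a)).toReal = ∫ x in Ici a, G x := by
  rw [gaussianReal_apply_eq_integral 0 one_ne_zero]
  exact ENNReal.toReal_ofReal (setIntegral_nonneg measurableSet_Ici fun x _ => (G_pos x).le)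

/-- Gaussian tail ratio bound: for `0 ≤ ε < t`, with `Φ(t) = P(N(0,1) ≥ t)`,
`Φ(t−ε)/Φ(t) ≤ 1 + (ε(t²+1)/t)·exp(εt)`. -/
theorem gauss_ratio (ε t : ℝ) (hε : 0 ≤ ε) (hεt : ε < t) :
    ((gaussianReal 0 1) (Set.Ici (t - ε))).toReal / ((gaussianReal 0 1) (Set.Ici t)).toReal
      ≤ 1 + (ε * (t ^ 2 + 1) / t) * Real.exp (ε * t) := by
  have ht : 0 < t := lt_of_le_of_lt hε hεt
  have hGt := G_pos t
  have hL : t/(t^2+1) * G t ≤ ∫ x in Ici t, G x := by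
    rw [integral_Ici_eq_integral_Ioi]
    exact tail_lower ht
  have hLpos : 0 < t/(t^2+1) * G t := by positivity
  have hB : 0 < ∫ x in Ici t, G x := lt_of_lt_of_le hLpos hL
  have hGe : G (t-ε) ≤ G t * Real.exp (ε*t) := by
    rw [G_def]
    rw [mul_assoc, ← Real.exp_add]
    refine mul_le_mul_of_nonneg_left (Real.exp_le_exp.mpr (by nlinarith [sq_nonneg ε])) (by positivity)
  have hsplit : ∫ x in Ici (t-ε), G x
      = (∫ x in Ico (t-ε) t, G x) + ∫ x in Ici t, G x := by
    rw [← Ico_union_Ici_eq_Ici (by linarith : t-ε ≤ t),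
      setIntegral_union (Set.disjoint_left.mpr fun x hx hx' => hx.2.not_ge hx')
        measurableSet_Ici G_integrable.restrict G_integrable.restrict]
  have hmid : ∫ x in Ico (t-ε) t, G x ≤ ε * G (t-ε) := by
    calc ∫ x in Ico (t-ε) t, G x ≤ ∫ _x in Ico (t-ε) t, G (t-ε) :=
          setIntegral_mono_on G_integrable.restrict
            (integrableOn_const measure_Ico_lt_top.ne) measurableSet_Ico
            (fun x hx => G_anti (by linarith) hx.1)
      _ = ε * G (t-ε) := by
          rw [setIntegral_const, Real.volume_real_Ico, smul_eq_mul,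
            max_eq_left (by linarith)]
          ring_nf
  have hA : ∫ x in Ici (t-ε), G x ≤ (∫ x in Ici t, G x) + ε * (G t * Real.exp (ε*t)) := by
    rw [hsplit]
    have : ε * G (t-ε) ≤ ε * (G t * Real.exp (ε*t)) := mul_le_mul_of_nonneg_left hGe hε
    linarith
  rw [tail_eq, tail_eq]
  set A := ∫ x in Ici (t-ε), G x with hAdef
  set B := ∫ x in Ici t, G x with hBdef
  calc A / B ≤ (B + ε * (G t * Real.exp (ε*t))) / B := by
        apply div_le_div_of_nonneg_right hA hB.le
    _ = 1 + ε * (G t * Real.exp (ε*t)) / B := by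
        rw [add_div, div_self hB.ne']
    _ ≤ 1 + ε * (G t * Real.exp (ε*t)) / (t/(t^2+1) * G t) := by
        exact add_le_add_right (div_le_div_of_nonneg_left (by positivity) hLpos hL) 1
    _ = 1 + (ε * (t ^ 2 + 1) / t) * Real.exp (ε * t) := by
        have h9 : ε * (G t * Real.exp (ε*t)) / (t/(t^2+1) * G t)
            = ε * (t ^ 2 + 1) / t * Real.exp (ε * t) := by
          field_simp
        rw [h9]
end

section
/- Let ν, c > 0 and let X₁,…,Xₙ be independent real random variables with ∑ᵢ E[Xᵢ²] ≤ ν and ∑ᵢ E|Xᵢ|^q ≤ (q!/2)·ν·c^{q−2} for all integers q ≥ 3. Then for all y > 0, P(∑ᵢ (Xᵢ − E Xᵢ) ≥ √(2νy) + cy) ≤ e^{−y}. -/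
open MeasureTheory ProbabilityTheory Real

lemma bern_exp_series (t : ℝ) :
    Real.exp t = 1 + t + ∑' q : ℕ, t ^ (q + 2) / (q + 2).factorial := by
  have hs := Real.summable_pow_div_factorial t
  have hs1 : Summable (fun n : ℕ => t ^ (n + 1) / (n + 1).factorial) :=
    (summable_nat_add_iff 1).mpr hs
  have he : Real.exp t = ∑' n : ℕ, t ^ n / n.factorial := by
    rw [Real.exp_eq_exp_ℝ, NormedSpace.exp_eq_tsum_div]
  rw [he, Summable.tsum_eq_zero_add hs, Summable.tsum_eq_zero_add hs1]
  simp [Nat.factorial]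
  ring

lemma bern_exp_sub_eq (t : ℝ) :
    Real.exp t - 1 - t = ∑' q : ℕ, t ^ (q + 2) / (q + 2).factorial := by
  have := bern_exp_series t
  linarith

lemma bern_exp_le (t : ℝ) :
    Real.exp t ≤ 1 + t + (Real.exp |t| - 1 - |t|) := by
  rcases le_or_gt 0 t with h | h
  · rw [abs_of_nonneg h]; linarith
  · rw [abs_of_neg h]
    have h1 : (-t) < Real.sinh (-t) := Real.self_lt_sinh_iff.mpr (by linarith)
    rw [Real.sinh_eq] at h1
    simp only [neg_neg] at h1
    linarith

lemma bern_integrable_exp_abs {Ω : Type*} [MeasurableSpace Ω] {μ : Measure Ω} {f : Ω → ℝ}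
    (hf : Measurable f)
    (hint : ∀ q : ℕ, Integrable (fun ω => |f ω| ^ q) μ)
    (hsum : Summable fun q : ℕ => (∫ ω, |f ω| ^ q ∂μ) / q.factorial) :
    Integrable (fun ω => Real.exp |f ω|) μ := by
  have hmeas : Measurable fun ω => Real.exp |f ω| := (hf.abs).exp
  refine ⟨hmeas.aestronglyMeasurable, ?_⟩
  rw [hasFiniteIntegral_iff_ofReal (Filter.Eventually.of_forall fun ω => (Real.exp_pos _).le)]
  have hpt : ∀ ω, ENNReal.ofReal (Real.exp |f ω|) =
      ∑' q : ℕ, ENNReal.ofReal (|f ω| ^ q / q.factorial) := by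
    intro ω
    rw [Real.exp_eq_exp_ℝ, NormedSpace.exp_eq_tsum_div]
    rw [ENNReal.ofReal_tsum_of_nonneg (fun q => by positivity)
      (Real.summable_pow_div_factorial _)]
  simp_rw [hpt]
  rw [lintegral_tsum (fun q => ((hf.abs.pow_const q).div_const _).ennreal_ofReal.aemeasurable)]
  have hterm : ∀ q : ℕ, ∫⁻ ω, ENNReal.ofReal (|f ω| ^ q / q.factorial) ∂μ =
      ENNReal.ofReal ((∫ ω, |f ω| ^ q ∂μ) / q.factorial) := by
    intro q
    rw [← ofReal_integral_eq_lintegral_ofReal ((hint q).div_const _)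
      (Filter.Eventually.of_forall fun ω => by positivity), integral_div]
  simp_rw [hterm]
  rw [← ENNReal.ofReal_tsum_of_nonneg (fun q => by positivity) hsum]
  exact ENNReal.ofReal_lt_top

/-- Bernstein's inequality under moment conditions: if `X₁,…,Xₙ` are independent with
`∑ᵢ E[Xᵢ²] ≤ ν` and `∑ᵢ E|Xᵢ|^q ≤ (q!/2)·ν·c^{q−2}` for all integers `q ≥ 3`, then for all
`y > 0`, `P(∑ᵢ (Xᵢ − E Xᵢ) ≥ √(2νy) + cy) ≤ e^{−y}`. -/
theorem bernstein_moment {Ω : Type*} [MeasurableSpace Ω] (μ : Measure Ω) [IsProbabilityMeasure μ]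
    {n : ℕ} (X : Fin n → Ω → ℝ) (hmeas : ∀ i, Measurable (X i))
    (hindep : iIndepFun X μ)
    (hmom : ∀ (i : Fin n) (q : ℕ), Integrable (fun ω => |X i ω| ^ q) μ)
    (ν c : ℝ) (hν : 0 < ν) (hc : 0 < c)
    (h2 : ∑ i, ∫ ω, (X i ω) ^ 2 ∂μ ≤ ν)
    (hq : ∀ q : ℕ, 3 ≤ q →
      ∑ i, ∫ ω, |X i ω| ^ q ∂μ ≤ ((Nat.factorial q : ℝ) / 2) * ν * c ^ (q - 2))
    (y : ℝ) (hy : 0 < y) :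
    (μ {ω | Real.sqrt (2 * ν * y) + c * y ≤ ∑ i, (X i ω - ∫ ω', X i ω' ∂μ)}).toReal
      ≤ Real.exp (-y) := by
  classical
  set ε : ℝ := Real.sqrt (2 * ν * y) + c * y with hεdef
  set m : Fin n → ℝ := fun i => ∫ ω', X i ω' ∂μ with hm
  set s : ℝ := Real.sqrt (2 * y / ν) with hsdef
  have hs : 0 < s := Real.sqrt_pos.mpr (by positivity)
  have hs2 : s ^ 2 = 2 * y / ν := Real.sq_sqrt (by positivity)
  set l : ℝ := s / (1 + c * s) with hldef
  have hd : 0 < 1 + c * s := by positivity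
  have hl : 0 < l := by positivity
  have hlc : l * c < 1 := by
    rw [hldef, div_mul_eq_mul_div, div_lt_one hd]; nlinarith
  -- basic moment facts
  have hMnn : ∀ (i : Fin n) (q : ℕ), 0 ≤ ∫ ω, |X i ω| ^ q ∂μ :=
    fun i q => integral_nonneg fun ω => by positivity
  have hsum2 : ∑ i, ∫ ω, |X i ω| ^ 2 ∂μ ≤ ν := by simp_rw [sq_abs]; exact h2
  have hkey : ∀ q : ℕ, ∑ i, ∫ ω, |X i ω| ^ (q + 2) ∂μ
      ≤ ((q + 2).factorial : ℝ) * (ν / 2) * c ^ q := by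
    intro q
    rcases Nat.eq_zero_or_pos q with h0 | h0
    · subst h0
      have he : ((0 + 2).factorial : ℝ) * (ν / 2) * c ^ 0 = ν := by
        norm_num [Nat.factorial]
        ring
      rw [he]
      exact hsum2
    · have h3 : 3 ≤ q + 2 := by omega
      have := hq (q + 2) h3
      have hq2 : q + 2 - 2 = q := by omega
      rw [hq2] at this
      calc ∑ i, ∫ ω, |X i ω| ^ (q + 2) ∂μ ≤ ((q + 2).factorial : ℝ) / 2 * ν * c ^ q := this
        _ = ((q + 2).factorial : ℝ) * (ν / 2) * c ^ q := by ring
  have hMle : ∀ (i : Fin n) (q : ℕ), ∫ ω, |X i ω| ^ (q + 2) ∂μ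
      ≤ ((q + 2).factorial : ℝ) * (ν / 2) * c ^ q := fun i q =>
    (Finset.single_le_sum (fun j _ => hMnn j (q + 2)) (Finset.mem_univ i)).trans (hkey q)
  -- the series terms
  have hfacpos : ∀ q : ℕ, (0:ℝ) < (q + 2).factorial := fun q => by
    exact_mod_cast Nat.factorial_pos _
  have hFint : ∀ (i : Fin n) (q : ℕ),
      Integrable (fun ω => (l * |X i ω|) ^ (q + 2) / ((q + 2).factorial : ℝ)) μ := by
    intro i q
    simp_rw [mul_pow]
    exact ((hmom i (q + 2)).const_mul _).div_const _
  have hFval : ∀ (i : Fin n) (q : ℕ),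
      ∫ ω, (l * |X i ω|) ^ (q + 2) / ((q + 2).factorial : ℝ) ∂μ
        = l ^ (q + 2) * (∫ ω, |X i ω| ^ (q + 2) ∂μ) / ((q + 2).factorial : ℝ) := by
    intro i q
    simp_rw [mul_pow, integral_div, integral_const_mul]
  have hFle : ∀ (i : Fin n) (q : ℕ),
      ∫ ω, (l * |X i ω|) ^ (q + 2) / ((q + 2).factorial : ℝ) ∂μ
        ≤ ν / 2 * l ^ 2 * (l * c) ^ q := by
    intro i q
    rw [hFval]
    calc l ^ (q + 2) * (∫ ω, |X i ω| ^ (q + 2) ∂μ) / ((q + 2).factorial : ℝ)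
        ≤ l ^ (q + 2) * (((q + 2).factorial : ℝ) * (ν / 2) * c ^ q) / ((q + 2).factorial : ℝ) := by
          gcongr
          exact hMle i q
      _ = ν / 2 * l ^ 2 * (l * c) ^ q := by
          field_simp
          ring
  have hgeo : Summable (fun q : ℕ => ν / 2 * l ^ 2 * (l * c) ^ q) :=
    (summable_geometric_of_lt_one (by positivity) hlc).mul_left _
  have hgeosum : ∑' q : ℕ, ν / 2 * l ^ 2 * (l * c) ^ q = ν / 2 * l ^ 2 * (1 - l * c)⁻¹ := by
    rw [tsum_mul_left, tsum_geometric_of_lt_one (by positivity) hlc]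
  have hFnn : ∀ (i : Fin n) (q : ℕ),
      0 ≤ ∫ ω, (l * |X i ω|) ^ (q + 2) / ((q + 2).factorial : ℝ) ∂μ :=
    fun i q => integral_nonneg fun ω => by positivity
  have hFsummable : ∀ i : Fin n, Summable
      (fun q : ℕ => ∫ ω, (l * |X i ω|) ^ (q + 2) / ((q + 2).factorial : ℝ) ∂μ) :=
    fun i => hgeo.of_nonneg_of_le (hFnn i) (hFle i)
  have hFnorm : ∀ i : Fin n, Summable
      (fun q : ℕ => ∫ ω, ‖(l * |X i ω|) ^ (q + 2) / ((q + 2).factorial : ℝ)‖ ∂μ) := by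
    intro i
    have : (fun q : ℕ => ∫ ω, ‖(l * |X i ω|) ^ (q + 2) / ((q + 2).factorial : ℝ)‖ ∂μ)
        = fun q : ℕ => ∫ ω, (l * |X i ω|) ^ (q + 2) / ((q + 2).factorial : ℝ) ∂μ := by
      funext q
      refine integral_congr_ae (Filter.Eventually.of_forall fun ω => ?_)
      exact Real.norm_of_nonneg (by positivity)
    rw [this]
    exact hFsummable i
  -- integrability of exp (l * |X i|)
  have habs : ∀ (i : Fin n) (ω : Ω), |l * X i ω| = l * |X i ω| := by
    intro i ω; rw [abs_mul, abs_of_pos hl]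
  have hexpabs : ∀ i : Fin n, Integrable (fun ω => Real.exp (l * |X i ω|)) μ := by
    intro i
    have h := bern_integrable_exp_abs (f := fun ω => l * X i ω) ((hmeas i).const_mul l)
      (fun q => by
        simp_rw [abs_mul, abs_of_pos hl, mul_pow]
        exact (hmom i q).const_mul _)
      (by
        have heq : ∀ q : ℕ, (∫ ω, |l * X i ω| ^ q ∂μ) / (q.factorial : ℝ)
            = l ^ q * (∫ ω, |X i ω| ^ q ∂μ) / (q.factorial : ℝ) := by
          intro q
          simp_rw [abs_mul, abs_of_pos hl, mul_pow, integral_const_mul]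
        simp_rw [heq]
        rw [← summable_nat_add_iff 2]
        have heq2 : (fun q : ℕ => l ^ (q + 2) * (∫ ω, |X i ω| ^ (q + 2) ∂μ)
            / (((q + 2).factorial : ℝ)))
            = fun q : ℕ => ∫ ω, (l * |X i ω|) ^ (q + 2) / ((q + 2).factorial : ℝ) ∂μ := by
          funext q
          rw [hFval]
        rw [heq2]
        exact hFsummable i)
    simpa only [habs i] using h
  have hXint : ∀ i : Fin n, Integrable (X i) μ := by
    intro i
    have h := hmom i 1
    simp only [pow_one] at h
    exact h.mono' (hmeas i).aestronglyMeasurable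
      (Filter.Eventually.of_forall fun ω => le_of_eq (Real.norm_eq_abs _))
  have hintexp : ∀ i : Fin n, Integrable (fun ω => Real.exp (l * X i ω)) μ := by
    intro i
    refine (hexpabs i).mono' (((hmeas i).const_mul l).exp).aestronglyMeasurable
      (Filter.Eventually.of_forall fun ω => ?_)
    rw [Real.norm_eq_abs, abs_of_pos (Real.exp_pos _)]
    exact Real.exp_le_exp.mpr (by
      have := le_abs_self (X i ω)
      nlinarith [abs_nonneg (X i ω)])
  have hintexpY : ∀ i : Fin n, Integrable (fun ω => Real.exp (l * (X i ω - m i))) μ := by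
    intro i
    simp_rw [mul_sub, Real.exp_sub]
    exact (hintexp i).div_const _
  -- per-variable mgf bound
  set R : Fin n → ℝ :=
    fun i => ∑' q : ℕ, ∫ ω, (l * |X i ω|) ^ (q + 2) / ((q + 2).factorial : ℝ) ∂μ with hR
  have hg_int : ∀ i : Fin n,
      Integrable (fun ω => Real.exp (l * |X i ω|) - 1 - l * |X i ω|) μ := fun i =>
    ((hexpabs i).sub (integrable_const 1)).sub (((hXint i).abs).const_mul l)
  have hg_integral : ∀ i : Fin n,
      ∫ ω, (Real.exp (l * |X i ω|) - 1 - l * |X i ω|) ∂μ = R i := by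
    intro i
    have hpt : (fun ω => Real.exp (l * |X i ω|) - 1 - l * |X i ω|)
        = fun ω => ∑' q : ℕ, (l * |X i ω|) ^ (q + 2) / ((q + 2).factorial : ℝ) := by
      funext ω
      exact bern_exp_sub_eq (l * |X i ω|)
    rw [hpt, hR]
    exact (integral_tsum_of_summable_integral_norm (hFint i) (hFnorm i)).symm
  have hmgf : ∀ i : Fin n, mgf (fun ω => X i ω - m i) μ l ≤ Real.exp (R i) := by
    intro i
    have hsplit : (fun ω => Real.exp (l * (X i ω - m i)))
        = fun ω => Real.exp (-(l * m i)) * Real.exp (l * X i ω) := by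
      funext ω
      rw [← Real.exp_add]
      ring_nf
    have h1 : mgf (fun ω => X i ω - m i) μ l
        = Real.exp (-(l * m i)) * ∫ ω, Real.exp (l * X i ω) ∂μ := by
      rw [mgf]
      simp_rw [hsplit]
      rw [integral_const_mul]
    have hRHSint : Integrable
        (fun ω => 1 + l * X i ω + (Real.exp (l * |X i ω|) - 1 - l * |X i ω|)) μ :=
      ((integrable_const 1).add ((hXint i).const_mul l)).add (hg_int i)
    have h2' : ∫ ω, Real.exp (l * X i ω) ∂μ ≤ 1 + l * m i + R i := by
      calc ∫ ω, Real.exp (l * X i ω) ∂μ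
          ≤ ∫ ω, (1 + l * X i ω + (Real.exp (l * |X i ω|) - 1 - l * |X i ω|)) ∂μ := by
            refine integral_mono (hintexp i) hRHSint fun ω => ?_
            have := bern_exp_le (l * X i ω)
            rwa [habs i ω] at this
        _ = 1 + l * m i + R i := by
            have hInt1 : Integrable (fun ω => 1 + l * X i ω) μ :=
              (integrable_const 1).add ((hXint i).const_mul l)
            rw [integral_add hInt1 (hg_int i),
              integral_add (integrable_const 1) ((hXint i).const_mul l),
              integral_const, integral_const_mul, hg_integral i]
            simp [hm]
    have h3 : (1:ℝ) + l * m i + R i ≤ Real.exp (l * m i + R i) := by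
      have := Real.add_one_le_exp (l * m i + R i)
      linarith
    calc mgf (fun ω => X i ω - m i) μ l
        = Real.exp (-(l * m i)) * ∫ ω, Real.exp (l * X i ω) ∂μ := h1
      _ ≤ Real.exp (-(l * m i)) * Real.exp (l * m i + R i) := by
          have := (Real.exp_pos (-(l * m i))).le
          exact mul_le_mul_of_nonneg_left (h2'.trans h3) this
      _ = Real.exp (R i) := by rw [← Real.exp_add]; ring_nf
  -- bound on the sum of R i
  have hRsum : ∑ i, R i ≤ ν / 2 * l ^ 2 * (1 - l * c)⁻¹ := by
    rw [hR, ← Summable.tsum_finsetSum (fun i _ => hFsummable i)]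
    rw [← hgeosum]
    refine Summable.tsum_le_tsum (fun q => ?_) (summable_sum fun i _ => hFsummable i) hgeo
    calc ∑ i, ∫ ω, (l * |X i ω|) ^ (q + 2) / ((q + 2).factorial : ℝ) ∂μ
        = l ^ (q + 2) * (∑ i, ∫ ω, |X i ω| ^ (q + 2) ∂μ) / ((q + 2).factorial : ℝ) := by
          simp_rw [hFval]
          rw [Finset.mul_sum, Finset.sum_div]
      _ ≤ l ^ (q + 2) * (((q + 2).factorial : ℝ) * (ν / 2) * c ^ q) / ((q + 2).factorial : ℝ) := by
          gcongr
          exact hkey q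
      _ = ν / 2 * l ^ 2 * (l * c) ^ q := by
          field_simp
          ring
  -- Chernoff
  set Y : Fin n → Ω → ℝ := fun i ω => X i ω - m i with hY
  have hYmeas : ∀ i, Measurable (Y i) := fun i => (hmeas i).sub measurable_const
  have hYindep : iIndepFun Y μ :=
    hindep.comp (fun i x => x - m i) (fun i => measurable_id.sub measurable_const)
  have hset : {ω | ε ≤ ∑ i, (X i ω - m i)} = {ω | ε ≤ (∑ i, Y i) ω} := by
    ext ω
    simp [hY, Finset.sum_apply]
  rw [hset]
  have hSint : Integrable (fun ω => Real.exp (l * (∑ i, Y i) ω)) μ :=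
    hYindep.integrable_exp_mul_sum hYmeas (fun i _ => hintexpY i)
  refine (measure_ge_le_exp_mul_mgf ε hl.le hSint).trans ?_
  have hmgfS : mgf (∑ i, Y i) μ l ≤ Real.exp (ν / 2 * l ^ 2 * (1 - l * c)⁻¹) := by
    rw [hYindep.mgf_sum hYmeas Finset.univ]
    calc ∏ i, mgf (Y i) μ l ≤ ∏ i, Real.exp (R i) := by
          refine Finset.prod_le_prod (fun i _ => mgf_nonneg) fun i _ => hmgf i
      _ = Real.exp (∑ i, R i) := (Real.exp_sum _ _).symm
      _ ≤ Real.exp (ν / 2 * l ^ 2 * (1 - l * c)⁻¹) := Real.exp_le_exp.mpr hRsum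
  calc Real.exp (-l * ε) * mgf (∑ i, Y i) μ l
      ≤ Real.exp (-l * ε) * Real.exp (ν / 2 * l ^ 2 * (1 - l * c)⁻¹) :=
        mul_le_mul_of_nonneg_left hmgfS (Real.exp_pos _).le
    _ = Real.exp (-l * ε + ν / 2 * l ^ 2 * (1 - l * c)⁻¹) := (Real.exp_add _ _).symm
    _ ≤ Real.exp (-y) := by
        apply Real.exp_le_exp.mpr
        have hsqrt : Real.sqrt (2 * ν * y) = ν * s := by
          have h1 : (ν * s) ^ 2 = 2 * ν * y := by
            rw [mul_pow, hs2]; field_simp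
          rw [← h1, Real.sqrt_sq (by positivity)]
        have hy' : y = ν * s ^ 2 / 2 := by rw [hs2]; field_simp
        have hd' : (1 + c * s) ≠ 0 := ne_of_gt hd
        have hclc : 1 - l * c = 1 / (1 + c * s) := by
          rw [hldef]; field_simp; ring
        have hfin : -l * ε + ν / 2 * l ^ 2 * (1 - l * c)⁻¹ = -y := by
          rw [hεdef, hsqrt, hy', hclc, hldef, one_div, inv_inv]
          field_simp
          ring
        exact le_of_eq hfin
end

section
/- Let D ≥ 2 be an integer, λ ≥ 0, and let s be a real random variable with all moments finite such that E[s^d] ≥ 0 for all d ≥ 0 and P(|s| ≥ δ) ≥ e^{−D} for some δ ≥ 0, with D even. If C := E[exp^{≤D}(λ̂² s)] with λ̂ > 0, then δ ≤ (D/λ̂²)·(C e D)^{1/D}. -/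
open MeasureTheory

lemma fact_bound_aux (n : ℕ) :
    (Nat.factorial (n + 1) : ℝ) * Real.exp n ≤ ((n : ℝ) + 1) ^ (n + 2) := by
  induction n with
  | zero => simp [Nat.factorial]
  | succ k ih =>
    have hexp : Real.exp (((k:ℝ)+2)⁻¹) ≤ ((k:ℝ)+2) / ((k:ℝ)+1) := by
      have h1 : (0:ℝ) < 1 - ((k:ℝ)+2)⁻¹ := by
        rw [sub_pos, inv_lt_one_iff₀]; right; linarith
      have h2 : 1 - ((k:ℝ)+2)⁻¹ ≤ Real.exp (-(((k:ℝ)+2)⁻¹)) := by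
        have := Real.add_one_le_exp (-(((k:ℝ)+2)⁻¹)); linarith
      have h3 := inv_anti₀ h1 h2
      rw [Real.exp_neg, inv_inv] at h3
      have h4 : 1 - ((k:ℝ)+2)⁻¹ = ((k:ℝ)+1)/((k:ℝ)+2) := by
        field_simp
        ring
      rwa [h4, inv_div] at h3
    have he : Real.exp 1 ≤ (((k:ℝ)+2) / ((k:ℝ)+1)) ^ (k+2) := by
      have h := pow_le_pow_left₀ (Real.exp_nonneg _) hexp (k+2)
      rw [← Real.exp_nat_mul] at h
      push_cast at h
      rwa [mul_inv_cancel₀ (by positivity)] at h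
    have key : Real.exp 1 * ((k:ℝ)+1) ^ (k+2) ≤ ((k:ℝ)+2) ^ (k+2) := by
      have h5 : (0:ℝ) < ((k:ℝ)+1) ^ (k+2) := by positivity
      have := mul_le_mul_of_nonneg_right he h5.le
      rwa [div_pow, div_mul_cancel₀] at this
      positivity
    calc (Nat.factorial (k+1+1) : ℝ) * Real.exp (↑(k+1))
        = ((k:ℝ)+2) * (((Nat.factorial (k+1):ℝ) * Real.exp k) * Real.exp 1) := by
          push_cast [Nat.factorial]
          rw [show ((k:ℝ)+1) = (k:ℝ)+1 from rfl, Real.exp_add]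
          ring
      _ ≤ ((k:ℝ)+2) * ((((k:ℝ)+1) ^ (k+2)) * Real.exp 1) := by
          gcongr
      _ = ((k:ℝ)+2) * (Real.exp 1 * ((k:ℝ)+1) ^ (k+2)) := by ring
      _ ≤ ((k:ℝ)+2) * (((k:ℝ)+2) ^ (k+2)) := by gcongr
      _ = (↑(k+1) + 1) ^ (k+1+2) := by push_cast; ring

/-- If `s` is a real random variable with all moments finite, `E[s^d] ≥ 0` for all `d`,
and `P(|s| ≥ δ) ≥ e^{−D}` with `D ≥ 2` even, `δ ≥ 0`, `λ̂ > 0`, then with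
`C = E[exp^{≤D}(λ̂² s)]` one has `δ ≤ (D/λ̂²)·(C e D)^{1/D}`. -/
theorem overlap_bound_from_ld {Ω : Type*} [MeasurableSpace Ω] (μ : Measure Ω)
    [IsProbabilityMeasure μ] (s : Ω → ℝ) (hmeas : Measurable s)
    (hint : ∀ d : ℕ, Integrable (fun ω => s ω ^ d) μ)
    (hpos : ∀ d : ℕ, 0 ≤ ∫ ω, s ω ^ d ∂μ)
    (D : ℕ) (hD2 : 2 ≤ D) (hDeven : Even D)
    (lam : ℝ) (hlam : 0 < lam) (δ : ℝ) (hδ : 0 ≤ δ)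
    (htail : ENNReal.ofReal (Real.exp (-(D : ℝ))) ≤ μ {ω | δ ≤ |s ω|}) :
    δ ≤ ((D : ℝ) / lam ^ 2) *
        ((∫ ω, ∑ d ∈ Finset.range (D + 1), (lam ^ 2 * s ω) ^ d / (Nat.factorial d : ℝ) ∂μ)
            * Real.exp 1 * (D : ℝ)) ^ ((D : ℝ)⁻¹) := by
  set L : ℝ := lam ^ 2 with hLdef
  have hL : 0 < L := by positivity
  set C : ℝ := ∫ ω, ∑ d ∈ Finset.range (D + 1), (L * s ω) ^ d / (Nat.factorial d : ℝ) ∂μ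
    with hCdef
  -- rewrite each summand
  have hfun : ∀ d : ℕ, (fun ω => (L * s ω) ^ d / (Nat.factorial d : ℝ))
      = fun ω => (L ^ d / (Nat.factorial d : ℝ)) * s ω ^ d := by
    intro d; funext ω; rw [mul_pow]; ring
  have hint' : ∀ d : ℕ, Integrable (fun ω => (L * s ω) ^ d / (Nat.factorial d : ℝ)) μ := by
    intro d; rw [hfun d]; exact (hint d).const_mul _
  have hCsum : C = ∑ d ∈ Finset.range (D + 1),
      (L ^ d / (Nat.factorial d : ℝ)) * ∫ ω, s ω ^ d ∂μ := by
    rw [hCdef, integral_finset_sum _ (fun d _ => hint' d)]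
    refine Finset.sum_congr rfl fun d _ => ?_
    rw [hfun d, integral_const_mul]
  -- C ≥ the D-th term
  have hterm : (L ^ D / (Nat.factorial D : ℝ)) * ∫ ω, s ω ^ D ∂μ ≤ C := by
    rw [hCsum]
    refine Finset.single_le_sum (f := fun d => (L ^ d / (Nat.factorial d : ℝ)) * ∫ ω, s ω ^ d ∂μ)
      (fun d _ => ?_) (Finset.self_mem_range_succ D)
    exact mul_nonneg (by positivity) (hpos d)
  -- tail bound on E[s^D]
  set A : Set Ω := {ω | δ ≤ |s ω|} with hAdef
  have hA : MeasurableSet A := measurableSet_le measurable_const hmeas.abs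
  have htoReal : Real.exp (-(D : ℝ)) ≤ (μ A).toReal := by
    have h := ENNReal.toReal_mono (measure_ne_top μ A) htail
    rwa [ENNReal.toReal_ofReal (Real.exp_nonneg _)] at h
  have hED : δ ^ D * Real.exp (-(D : ℝ)) ≤ ∫ ω, s ω ^ D ∂μ := by
    have h1 : δ ^ D * Real.exp (-(D : ℝ)) ≤ δ ^ D * (μ A).toReal :=
      mul_le_mul_of_nonneg_left htoReal (by positivity)
    have h2 : δ ^ D * (μ A).toReal ≤ ∫ ω in A, s ω ^ D ∂μ := by
      have hconst : IntegrableOn (fun _ : Ω => δ ^ D) A μ :=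
        (integrableOn_const_iff).mpr (Or.inr (measure_lt_top μ A))
      have hm := setIntegral_mono_on hconst ((hint D).integrableOn) hA
        (fun ω hω => show δ ^ D ≤ s ω ^ D by
          calc δ ^ D ≤ |s ω| ^ D := pow_le_pow_left₀ hδ hω D
            _ = s ω ^ D := hDeven.pow_abs _)
      rwa [setIntegral_const, smul_eq_mul, mul_comm] at hm
    have h3 : ∫ ω in A, s ω ^ D ∂μ ≤ ∫ ω, s ω ^ D ∂μ :=
      setIntegral_le_integral (hint D)
        (Filter.Eventually.of_forall fun ω => hDeven.pow_nonneg _)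
    linarith
  have hfacpos : (0:ℝ) < (Nat.factorial D : ℝ) := by
    exact_mod_cast Nat.factorial_pos D
  have hC0 : 0 ≤ C := by
    refine le_trans ?_ hterm
    exact mul_nonneg (by positivity) (hpos D)
  -- combine: (L*δ)^D ≤ C * D! * exp D
  have hmain : (L * δ) ^ D ≤ C * ((Nat.factorial D : ℝ) * Real.exp D) := by
    have h1 : (L ^ D / (Nat.factorial D : ℝ)) * (δ ^ D * Real.exp (-(D:ℝ))) ≤ C :=
      le_trans (mul_le_mul_of_nonneg_left hED (by positivity)) hterm
    have h2 := mul_le_mul_of_nonneg_right h1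
      (by positivity : (0:ℝ) ≤ (Nat.factorial D : ℝ) * Real.exp D)
    calc (L * δ) ^ D
        = (L ^ D / (Nat.factorial D : ℝ)) * (δ ^ D * Real.exp (-(D:ℝ)))
            * ((Nat.factorial D : ℝ) * Real.exp D) := by
          rw [Real.exp_neg, mul_pow]
          field_simp
      _ ≤ C * ((Nat.factorial D : ℝ) * Real.exp D) := h2
  -- factorial bound
  obtain ⟨m, rfl⟩ : ∃ m, D = m + 1 := ⟨D - 1, by omega⟩
  have hfb : (Nat.factorial (m+1) : ℝ) * Real.exp (m+1)
      ≤ Real.exp 1 * ((m:ℝ)+1) ^ (m+2) := by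
    have h := fact_bound_aux m
    have := mul_le_mul_of_nonneg_right h (Real.exp_nonneg 1)
    calc (Nat.factorial (m+1) : ℝ) * Real.exp ((m:ℝ)+1)
        = (Nat.factorial (m+1) : ℝ) * Real.exp m * Real.exp 1 := by
          rw [Real.exp_add]; ring
      _ ≤ ((m:ℝ)+1) ^ (m+2) * Real.exp 1 := this
      _ = Real.exp 1 * ((m:ℝ)+1) ^ (m+2) := by ring
  set Y : ℝ := C * Real.exp 1 * ((m:ℕ)+1 : ℝ) with hYdef
  have hY0 : 0 ≤ Y := by
    refine mul_nonneg (mul_nonneg hC0 (Real.exp_nonneg 1)) (by positivity)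
  have hmain2 : (L * δ) ^ (m+1) ≤ Y * ((m:ℝ)+1) ^ (m+1) := by
    have hcast : ((m+1 : ℕ) : ℝ) = (m:ℝ)+1 := by push_cast; ring
    calc (L * δ) ^ (m+1) ≤ C * ((Nat.factorial (m+1) : ℝ) * Real.exp (m+1:ℕ)) := hmain
      _ ≤ C * (Real.exp 1 * ((m:ℝ)+1) ^ (m+2)) := by
          refine mul_le_mul_of_nonneg_left ?_ hC0
          rw [hcast]; exact hfb
      _ = Y * ((m:ℝ)+1) ^ (m+1) := by
          rw [hYdef]; ring
  -- take D-th roots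
  have hpow : (Y ^ (((m+1:ℕ) : ℝ))⁻¹) ^ (m+1) = Y :=
    Real.rpow_inv_natCast_pow hY0 (by omega)
  have hroot : L * δ ≤ ((m:ℝ)+1) * Y ^ (((m+1:ℕ):ℝ))⁻¹ := by
    refine le_of_pow_le_pow_left₀ (n := m+1) (by omega) (by positivity) ?_
    calc (L * δ) ^ (m+1) ≤ Y * ((m:ℝ)+1) ^ (m+1) := hmain2
      _ = (((m:ℝ)+1) * Y ^ (((m+1:ℕ):ℝ))⁻¹) ^ (m+1) := by rw [mul_pow, hpow]; ring
  have hfinal : δ ≤ (((m:ℝ)+1) / L) * Y ^ (((m+1:ℕ):ℝ))⁻¹ := by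
    rw [div_mul_eq_mul_div, le_div_iff₀ hL]
    calc δ * L = L * δ := by ring
      _ ≤ ((m:ℝ)+1) * Y ^ (((m+1:ℕ):ℝ))⁻¹ := hroot
  rw [hYdef] at hfinal
  push_cast at hfinal ⊢
  exact hfinal
end
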